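/- Let q ≥ 1 be an integer and υ > 0, τ > 0. Then for all real A, B ≥ 0: (A + τB)^(2q−1) ≤ e^((2q−2)υτ) · A^(2q−1) + τ·(τ^(2q−2) + (1 + (2/υ)^(2q−1)) e^((2q−2)τ)) · B^(2q−1). -/

import Mathlib

private lemma aux_pow_add (n : ℕ) (hn : 1 ≤ n) (lam x y : ℝ) (hlam : 0 < lam)
    (hx : 0 ≤ x) (hy : 0 ≤ y) :
    (x + y) ^ n ≤ (1 + lam) ^ (n - 1) * x ^ n + (1 + 1 / lam) ^ (n - 1) * y ^ n := by
  have h1 : (0:ℝ) < 1 + lam := by linarith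
  set a : ℝ := 1 / (1 + lam) with ha_def
  set b : ℝ := lam / (1 + lam) with hb_def
  have ha : 0 < a := by positivity
  have hb : 0 < b := by positivity
  have hab : a + b = 1 := by
    rw [ha_def, hb_def, ← add_div, div_self h1.ne']
  have hconv := (convexOn_pow n).2 (Set.mem_Ici.2 (by positivity : (0:ℝ) ≤ x / a))
    (Set.mem_Ici.2 (by positivity : (0:ℝ) ≤ y / b)) ha.le hb.le hab
  simp only [smul_eq_mul] at hconv
  rw [mul_div_cancel₀ _ ha.ne', mul_div_cancel₀ _ hb.ne'] at hconv
  have key : ∀ (c z : ℝ), 0 < c → c * (z / c) ^ n = (1 / c) ^ (n - 1) * z ^ n := by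
    intro c z hc
    have hcn : c ^ n = c ^ (n - 1) * c := by
      rw [← pow_succ]; congr 1; omega
    rw [div_pow, hcn, one_div, inv_pow]
    field_simp
  rw [key a x ha, key b y hb] at hconv
  have e1 : (1 : ℝ) / a = 1 + lam := by rw [ha_def, one_div_one_div]
  have e2 : (1 : ℝ) / b = 1 + 1 / lam := by
    rw [hb_def]; field_simp; ring
  rw [e1, e2] at hconv
  exact hconv

private lemma aux_bound (m : ℕ) (τ c : ℝ) (hτ : 0 < τ) (hc : 0 < c) :
    (τ + c) ^ m ≤ (1 + c ^ (m + 1)) * Real.exp (m * τ) := by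
  have h1 : τ + c ≤ max c 1 * (1 + τ) := by
    rcases le_total c 1 with h | h
    · rw [max_eq_right h]; linarith
    · rw [max_eq_left h]; nlinarith
  have h2 : (τ + c) ^ m ≤ (max c 1) ^ m * (1 + τ) ^ m := by
    rw [← mul_pow]; exact pow_le_pow_left₀ (by positivity) h1 m
  have h3 : (1 + τ) ^ m ≤ Real.exp (m * τ) := by
    calc (1 + τ) ^ m ≤ (Real.exp τ) ^ m :=
          pow_le_pow_left₀ (by positivity) (by linarith [Real.add_one_le_exp τ]) m
      _ = Real.exp (m * τ) := (Real.exp_nat_mul τ m).symm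
  have h4 : (max c 1) ^ m ≤ 1 + c ^ (m + 1) := by
    rcases le_total c 1 with h | h
    · rw [max_eq_right h, one_pow]
      have : (0:ℝ) ≤ c ^ (m + 1) := by positivity
      linarith
    · rw [max_eq_left h]
      have : c ^ m ≤ c ^ (m + 1) := pow_le_pow_right₀ h (Nat.le_succ m)
      linarith
  calc (τ + c) ^ m ≤ (max c 1) ^ m * (1 + τ) ^ m := h2
    _ ≤ (1 + c ^ (m + 1)) * Real.exp (m * τ) :=
        mul_le_mul h4 h3 (by positivity) (by positivity)

theorem stmt1 (q : ℕ) (hq : 1 ≤ q) (υ τ : ℝ) (hυ : 0 < υ) (hτ : 0 < τ)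
    (A B : ℝ) (hA : 0 ≤ A) (hB : 0 ≤ B) :
    (A + τ * B) ^ (2 * q - 1) ≤
      Real.exp ((2 * (q : ℝ) - 2) * υ * τ) * A ^ (2 * q - 1) +
      τ * (τ ^ (2 * q - 2) + (1 + (2 / υ) ^ (2 * q - 1)) * Real.exp ((2 * (q : ℝ) - 2) * τ)) *
        B ^ (2 * q - 1) := by
  set n := 2 * q - 1 with hn_def
  have hn : 1 ≤ n := by omega
  have hm : n - 1 = 2 * q - 2 := by omega
  have hmn : (n - 1) + 1 = n := by omega
  have hcast : ((n - 1 : ℕ) : ℝ) = 2 * (q : ℝ) - 2 := by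
    rw [hm]; push_cast [Nat.cast_sub (show 2 ≤ 2 * q by omega)]; ring
  set lam : ℝ := υ * τ / 2 with hlam_def
  have hlam : 0 < lam := by positivity
  have h0 := aux_pow_add n hn lam A (τ * B) hlam hA (by positivity)
  -- bound the A term
  have hA1 : (1 + lam) ^ (n - 1) * A ^ n ≤ Real.exp ((2 * (q : ℝ) - 2) * υ * τ) * A ^ n := by
    apply mul_le_mul_of_nonneg_right _ (by positivity)
    calc (1 + lam) ^ (n - 1) ≤ (Real.exp (υ * τ)) ^ (n - 1) := by
          apply pow_le_pow_left₀ (by positivity)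
          have h1 : lam + 1 ≤ Real.exp lam := Real.add_one_le_exp lam
          have h2 : Real.exp lam ≤ Real.exp (υ * τ) := by
            apply Real.exp_le_exp.2; rw [hlam_def]; linarith
          linarith
      _ = Real.exp (((n - 1 : ℕ) : ℝ) * (υ * τ)) := (Real.exp_nat_mul _ _).symm
      _ = Real.exp ((2 * (q : ℝ) - 2) * υ * τ) := by rw [hcast]; ring_nf
  -- bound the B term
  have hB1 : (1 + 1 / lam) ^ (n - 1) * (τ * B) ^ n = τ * (τ + 2 / υ) ^ (n - 1) * B ^ n := by
    have e : (1 + 1 / lam) * τ = τ + 2 / υ := by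
      rw [hlam_def]; field_simp
    calc (1 + 1 / lam) ^ (n - 1) * (τ * B) ^ n
        = ((1 + 1 / lam) * τ) ^ (n - 1) * (τ * B ^ n) := by
          rw [mul_pow, show τ ^ n = τ ^ (n - 1) * τ from by rw [← pow_succ, hmn], mul_pow]
          ring
      _ = τ * (τ + 2 / υ) ^ (n - 1) * B ^ n := by rw [e]; ring
  have hB2 : (τ + 2 / υ) ^ (n - 1) ≤
      (1 + (2 / υ) ^ n) * Real.exp ((2 * (q : ℝ) - 2) * τ) := by
    have := aux_bound (n - 1) τ (2 / υ) hτ (by positivity)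
    rw [hmn, hcast] at this
    exact this
  have hB3 : τ * (τ + 2 / υ) ^ (n - 1) * B ^ n ≤
      τ * (τ ^ (2 * q - 2) + (1 + (2 / υ) ^ n) * Real.exp ((2 * (q : ℝ) - 2) * τ)) * B ^ n := by
    apply mul_le_mul_of_nonneg_right _ (by positivity)
    apply mul_le_mul_of_nonneg_left _ hτ.le
    have : (0:ℝ) ≤ τ ^ (2 * q - 2) := by positivity
    linarith
  calc (A + τ * B) ^ n ≤ (1 + lam) ^ (n - 1) * A ^ n + (1 + 1 / lam) ^ (n - 1) * (τ * B) ^ n := h0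
    _ ≤ Real.exp ((2 * (q : ℝ) - 2) * υ * τ) * A ^ n +
        τ * (τ ^ (2 * q - 2) + (1 + (2 / υ) ^ n) * Real.exp ((2 * (q : ℝ) - 2) * τ)) * B ^ n := by
        rw [hB1] at h0 ⊢
        exact add_le_add hA1 hB3
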